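/- For every natural number n ≥ 1, if f : [0,1] → ℝ is nondecreasing then its n-th Bernstein polynomial B_nf is nondecreasing on [0,1], and if f is nonincreasing then B_nf is nonincreasing on [0,1]. -/

import Mathlib

open Filter Set MeasureTheory
open scoped ENNReal Topology

/-- `l` is a Λ-sequence (indexed from 0, so `l 0` plays the role of `λ₁`):
a nondecreasing sequence of positive reals whose reciprocals have divergent sum. -/
def IsLambdaSeq (l : ℕ → ℝ) : Prop :=
  Monotone l ∧ (∀ n, 0 < l n) ∧ ¬ Summable (fun n => 1 / l n)

/-- A proper Λ-sequence: additionally `λₙ → ∞`. -/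
def IsProperLambdaSeq (l : ℕ → ℝ) : Prop :=
  IsLambdaSeq l ∧ Tendsto l atTop atTop

/-- The Λ-variation of `f` computed over partition points taken from `K`:
the supremum of `∑ⱼ |f(x_{j+1}) - f(x_j)| / λ_{β(j)}` over all `m`, all nondecreasing
tuples `x₁ ≤ … ≤ x_{m+1}` of points of `K` and all permutations `β` of the gaps. -/
noncomputable def lamVarOn (l : ℕ → ℝ) (f : ℝ → ℝ) (K : Set ℝ) : ℝ≥0∞ :=
  ⨆ (m : ℕ) (x : Fin (m + 1) → ℝ) (_ : Monotone x) (_ : ∀ j, x j ∈ K)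
    (β : Equiv.Perm (Fin m)),
    ∑ j : Fin m, ENNReal.ofReal (|f (x j.succ) - f (x j.castSucc)| / l (β j))

/-- The Λ-variation of `f : [0,1] → ℝ`. -/
noncomputable def lamVar (l : ℕ → ℝ) (f : ℝ → ℝ) : ℝ≥0∞ :=
  lamVarOn l f (Set.Icc 0 1)

/-- The norm `‖f‖_Λ = V_Λ(f) + |f 0|` (valued in `[0,∞]`). -/
noncomputable def lamNorm (l : ℕ → ℝ) (f : ℝ → ℝ) : ℝ≥0∞ :=
  lamVar l f + ENNReal.ofReal |f 0|

/-- `f` is continuous in Λ-variation: `V_{Λ_(m)}(f) → 0` as `m → ∞`. -/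
def ContInLamVar (l : ℕ → ℝ) (f : ℝ → ℝ) : Prop :=
  Tendsto (fun m => lamVar (fun n => l (n + m)) f) atTop (𝓝 0)

/-- The restricted Λ-variation `V_{Λ,δ}(f)`: the supremum of `∑ⱼ |f(bⱼ) - f(aⱼ)| / λⱼ`
over all finite sequences of nonoverlapping closed subintervals `[aⱼ, bⱼ]` of `[0,1]`
of length at most `δ`, listed in any order. -/
noncomputable def lamVarDelta (l : ℕ → ℝ) (δ : ℝ) (f : ℝ → ℝ) : ℝ≥0∞ :=
  ⨆ (k : ℕ) (a : Fin k → ℝ) (b : Fin k → ℝ)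
    (_ : ∀ j, 0 ≤ a j ∧ a j ≤ b j ∧ b j ≤ 1 ∧ b j - a j ≤ δ)
    (_ : ∀ i j, i ≠ j → b i ≤ a j ∨ b j ≤ a i),
    ∑ j : Fin k, ENNReal.ofReal (|f (b j) - f (a j)| / l j)

/-- The `n`-th Bernstein polynomial of `f : [0,1] → ℝ`. -/
noncomputable def bern (n : ℕ) (f : ℝ → ℝ) (x : ℝ) : ℝ :=
  ∑ k ∈ Finset.range (n + 1),
    f ((k : ℝ) / n) * (n.choose k : ℝ) * x ^ k * (1 - x) ^ (n - k)

/-- The `n`-th Kantorovich polynomial of `f : [0,1] → ℝ`. -/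
noncomputable def kant (n : ℕ) (f : ℝ → ℝ) (x : ℝ) : ℝ :=
  ∑ k ∈ Finset.range (n + 1),
    (n.choose k : ℝ) * x ^ k * (1 - x) ^ (n - k) *
      ((n + 1) * ∫ t in ((k : ℝ) / (n + 1))..(((k : ℝ) + 1) / (n + 1)), f t)

lemma hasDerivAt_term (c : ℝ) (k m : ℕ) (x : ℝ) :
    HasDerivAt (fun x : ℝ => c * x ^ k * (1 - x) ^ m)
      (c * ((k : ℝ) * x ^ (k - 1) * (1 - x) ^ m - (m : ℝ) * x ^ k * (1 - x) ^ (m - 1))) x := by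
  have h1 : HasDerivAt (fun x : ℝ => x ^ k) ((k : ℝ) * x ^ (k - 1)) x := hasDerivAt_pow k x
  have h2 : HasDerivAt (fun x : ℝ => (1 - x) ^ m) (-((m : ℝ) * (1 - x) ^ (m - 1))) x := by
    have := (hasDerivAt_pow m (1 - x)).comp x ((hasDerivAt_const x (1:ℝ)).sub (hasDerivAt_id x))
    simpa [Function.comp_def] using this
  have := ((h1.const_mul c).fun_mul h2)
  refine this.congr_deriv ?_
  ring

lemma bern_hasDerivAt (m : ℕ) (f : ℝ → ℝ) (x : ℝ) :
    HasDerivAt (bern (m + 1) f)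
      (((m : ℝ) + 1) * ∑ k ∈ Finset.range (m + 1),
        (f (((k : ℝ) + 1) / (m + 1)) - f ((k : ℝ) / (m + 1))) * ((m.choose k : ℝ))
          * x ^ k * (1 - x) ^ (m - k)) x := by
  have H : HasDerivAt (bern (m + 1) f)
      (∑ k ∈ Finset.range (m + 2),
        (f ((k : ℝ) / (m + 1)) * ((m+1).choose k : ℝ)) *
          ((k : ℝ) * x ^ (k - 1) * (1 - x) ^ (m + 1 - k)
            - ((m + 1 - k : ℕ) : ℝ) * x ^ k * (1 - x) ^ (m + 1 - k - 1))) x := by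
    apply HasDerivAt.fun_sum
    intro k hk
    have := hasDerivAt_term (f ((k : ℝ) / (m + 1)) * ((m+1).choose k : ℝ)) k (m + 1 - k) x
    simp only [Nat.cast_add, Nat.cast_one]
    exact this
  convert H using 1
  rw [Finset.mul_sum]
  -- split into A - B
  have split : ∑ k ∈ Finset.range (m + 2),
      (f ((k : ℝ) / (m + 1)) * ((m+1).choose k : ℝ)) *
        ((k : ℝ) * x ^ (k - 1) * (1 - x) ^ (m + 1 - k)
          - ((m + 1 - k : ℕ) : ℝ) * x ^ k * (1 - x) ^ (m + 1 - k - 1))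
      = (∑ k ∈ Finset.range (m + 2),
          (f ((k : ℝ) / (m + 1)) * ((m+1).choose k : ℝ)) * ((k : ℝ) * x ^ (k - 1) * (1 - x) ^ (m + 1 - k)))
        - (∑ k ∈ Finset.range (m + 2),
          (f ((k : ℝ) / (m + 1)) * ((m+1).choose k : ℝ)) * (((m + 1 - k : ℕ) : ℝ) * x ^ k * (1 - x) ^ (m + 1 - k - 1))) := by
    rw [← Finset.sum_sub_distrib]
    exact Finset.sum_congr rfl fun k _ => by ring
  rw [split]
  have hA : ∑ k ∈ Finset.range (m + 2),
      (f ((k : ℝ) / (m + 1)) * ((m+1).choose k : ℝ)) * ((k : ℝ) * x ^ (k - 1) * (1 - x) ^ (m + 1 - k))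
      = ∑ k ∈ Finset.range (m + 1),
        f (((k : ℝ) + 1) / (m + 1)) * (((m+1).choose (k+1) * (k+1) : ℕ) : ℝ) * x ^ k * (1 - x) ^ (m - k) := by
    rw [Finset.sum_range_succ']
    simp only [Nat.cast_zero, zero_mul, mul_zero, zero_add, add_zero]
    refine Finset.sum_congr rfl fun k hk => ?_
    have h1 : m + 1 - (k + 1) = m - k := by omega
    have h2 : (k + 1) - 1 = k := rfl
    rw [h1, h2]
    push_cast
    ring
  have hB : ∑ k ∈ Finset.range (m + 2),
      (f ((k : ℝ) / (m + 1)) * ((m+1).choose k : ℝ)) * (((m + 1 - k : ℕ) : ℝ) * x ^ k * (1 - x) ^ (m + 1 - k - 1))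
      = ∑ k ∈ Finset.range (m + 1),
        f ((k : ℝ) / (m + 1)) * (((m+1).choose k * (m + 1 - k) : ℕ) : ℝ) * x ^ k * (1 - x) ^ (m - k) := by
    rw [Finset.sum_range_succ]
    simp only [Nat.sub_self, Nat.cast_zero, zero_mul, mul_zero, add_zero]
    refine Finset.sum_congr rfl fun k hk => ?_
    have hk' : k ≤ m := by simpa [Nat.lt_succ_iff] using hk
    have h1 : m + 1 - k - 1 = m - k := by omega
    rw [h1]
    push_cast [Nat.cast_sub (by omega : k ≤ m + 1)]
    ring
  rw [hA, hB, ← Finset.sum_sub_distrib]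
  refine Finset.sum_congr rfl fun k hk => ?_
  have hk' : k ≤ m := by simpa [Nat.lt_succ_iff] using hk
  have e1 : (m+1).choose (k+1) * (k+1) = (m + 1) * m.choose k := by
    have h := Nat.add_one_mul_choose_eq m k
    exact h.symm
  have e2 : (m+1).choose k * (m + 1 - k) = (m + 1) * m.choose k := by
    rw [← Nat.choose_mul_succ_eq m k, mul_comm]
  rw [e1, e2]
  push_cast
  ring

lemma bern_mono_aux (m : ℕ) (f : ℝ → ℝ) (hf : MonotoneOn f (Set.Icc 0 1)) :
    MonotoneOn (bern (m + 1) f) (Set.Icc 0 1) := by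
  apply monotoneOn_of_deriv_nonneg (convex_Icc 0 1)
  · exact fun x _ => ((bern_hasDerivAt m f x).differentiableAt.continuousAt).continuousWithinAt
  · exact fun x _ => ((bern_hasDerivAt m f x).differentiableAt).differentiableWithinAt
  · intro x hx
    rw [interior_Icc] at hx
    rw [(bern_hasDerivAt m f x).deriv]
    apply mul_nonneg (by positivity)
    apply Finset.sum_nonneg
    intro k hk
    have hk' : k ≤ m := by simpa [Nat.lt_succ_iff] using hk
    have hm1 : (0:ℝ) < (m:ℝ) + 1 := by positivity
    have h1 : ((k:ℝ)) / (m + 1) ∈ Set.Icc (0:ℝ) 1 := by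
      constructor
      · positivity
      · rw [div_le_one hm1]
        have : (k:ℝ) ≤ m := Nat.cast_le.2 hk'
        linarith
    have h2 : ((k:ℝ) + 1) / (m + 1) ∈ Set.Icc (0:ℝ) 1 := by
      constructor
      · positivity
      · rw [div_le_one hm1]
        have : (k:ℝ) ≤ m := Nat.cast_le.2 hk'
        linarith
    have hle : ((k:ℝ)) / (m + 1) ≤ ((k:ℝ) + 1) / (m + 1) := by
      gcongr
      linarith
    have hd : 0 ≤ f (((k:ℝ) + 1) / (m + 1)) - f ((k:ℝ) / (m + 1)) :=
      sub_nonneg.2 (hf h1 h2 hle)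
    have hx1 : (0:ℝ) ≤ x := le_of_lt hx.1
    have hx2 : (0:ℝ) ≤ 1 - x := by linarith [hx.2]
    positivity

lemma bern_neg (n : ℕ) (f : ℝ → ℝ) : bern n (fun t => - f t) = fun x => - bern n f x := by
  funext x
  simp [bern, ← Finset.sum_neg_distrib, neg_mul]


/-- For every `n ≥ 1`, if `f : [0,1] → ℝ` is nondecreasing then `B_n f` is
nondecreasing on `[0,1]`, and if `f` is nonincreasing then `B_n f` is nonincreasing on `[0,1]`. -/
theorem bernstein_preserves_monotonicity (n : ℕ) (hn : 1 ≤ n) (f : ℝ → ℝ) :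
    (MonotoneOn f (Set.Icc 0 1) → MonotoneOn (bern n f) (Set.Icc 0 1)) ∧
    (AntitoneOn f (Set.Icc 0 1) → AntitoneOn (bern n f) (Set.Icc 0 1)) := by
  obtain ⟨m, rfl⟩ : ∃ m, n = m + 1 := ⟨n - 1, by omega⟩
  constructor
  · exact bern_mono_aux m f
  · intro hf
    have hmono : MonotoneOn (bern (m + 1) fun t => - f t) (Set.Icc 0 1) :=
      bern_mono_aux m _ (fun a ha b hb hab => neg_le_neg (hf ha hb hab))
    rw [bern_neg] at hmono
    intro a ha b hb hab
    have := hmono ha hb hab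
    simp only at this
    linarith
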